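/- Define the linear operator Q⁺ := ½(b⁻∘f⁺ + f⁺∘b⁻) on V. Then for all integers m ≥ 0 and 0 ≤ n ≤ p: if m is even, Q⁺φ_{m,n} = (−1)ⁿ m ψ_{m−1,n+1}, and if m is odd, Q⁺φ_{m,n} = (−1)ⁿ ( φ_{m−1,n+1} + (m−1) ψ_{m−1,n+1} ); and for all integers m ≥ 1 and 1 ≤ n ≤ p: if m is even, Q⁺ψ_{m,n} = (−1)^{n+1} ψ_{m−1,n+1}, and if m is odd, Q⁺ψ_{m,n} = 0. Consequently Q⁺∘Q⁺ = 0 as an operator on V. -/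
import Mathlib


open scoped BigOperators

/-- Indices of the basis vectors `φ_{m,n}`: pairs `(m,n)` of naturals with `n ≤ p`. -/
abbrev PhiIdx (p : ℕ) := {mn : ℕ × ℕ // mn.2 ≤ p}

/-- Indices of the basis vectors `ψ_{m,n}`: pairs `(m,n)` of naturals with
`1 ≤ m` and `1 ≤ n ≤ p - 1`. -/
abbrev PsiIdx (p : ℕ) := {mn : ℕ × ℕ // 1 ≤ mn.1 ∧ 1 ≤ mn.2 ∧ mn.2 + 1 ≤ p}

/-- The index set of the basis of the Fock-like carrier space. -/
abbrev FockIdx (p : ℕ) := PhiIdx p ⊕ PsiIdx p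

/-- The Fock-like carrier space: the free `ℂ`-vector space on the basis
`{φ_{m,n} : m ≥ 0, 0 ≤ n ≤ p} ∪ {ψ_{m,n} : m ≥ 1, 1 ≤ n ≤ p−1}`. -/
abbrev FockV (p : ℕ) := FockIdx p →₀ ℂ

/-- The vector `φ_{m,n}`, extended by `0` outside the range `m ≥ 0`, `0 ≤ n ≤ p`. -/
noncomputable def phi (p : ℕ) (m n : ℤ) : FockV p :=
  if h : 0 ≤ m ∧ 0 ≤ n ∧ n ≤ (p : ℤ) then
    Finsupp.single (Sum.inl ⟨(m.toNat, n.toNat), by show n.toNat ≤ p; omega⟩) 1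
  else 0

/-- The vector `ψ_{m,n}`, extended by the conventions `ψ_{m,0} = ψ_{0,n} = 0`,
`ψ_{m,p} = (1/p)·φ_{m,p}` (for `m ≥ 1`) and `ψ_{m,n} = 0` outside the range. -/
noncomputable def psi (p : ℕ) (m n : ℤ) : FockV p :=
  if h : 1 ≤ m ∧ 1 ≤ n ∧ n ≤ (p : ℤ) - 1 then
    Finsupp.single (Sum.inr ⟨(m.toNat, n.toNat),
      ⟨by show 1 ≤ m.toNat; omega, by show 1 ≤ n.toNat; omega,
       by show n.toNat + 1 ≤ p; omega⟩⟩) 1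
  else if 1 ≤ m ∧ n = (p : ℤ) then (1 / (p : ℂ)) • phi p m n
  else 0

/-- Image of the basis vector `φ_{m,n}` under `b⁺`. -/
noncomputable def bpPhi (p : ℕ) (m n : ℤ) : FockV p :=
  ((-1 : ℂ) ^ n) • phi p (m + 1) n - (2 * (n : ℂ) * (-1 : ℂ) ^ n) • psi p (m + 1) n

/-- Image of the basis vector `ψ_{m,n}` under `b⁺`. -/
noncomputable def bpPsi (p : ℕ) (m n : ℤ) : FockV p :=
  (-(-1 : ℂ) ^ n) • psi p (m + 1) n

/-- Image of the basis vector `φ_{m,n}` under `b⁻`. -/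
noncomputable def bmPhi (p : ℕ) (m n : ℤ) : FockV p :=
  if Even m then
    ((-1 : ℂ) ^ n * (m : ℂ)) • phi p (m - 1) n
      - (2 * (-1 : ℂ) ^ n * (n : ℂ) * (m : ℂ)) • psi p (m - 1) n
  else
    (-(-1 : ℂ) ^ n * (2 * (n : ℂ) - (m : ℂ) - ((p : ℂ) - 1))) • phi p (m - 1) n
      - (2 * (-1 : ℂ) ^ n * (n : ℂ) * ((m : ℂ) - 1)) • psi p (m - 1) n

/-- Image of the basis vector `ψ_{m,n}` under `b⁻`. -/
noncomputable def bmPsi (p : ℕ) (m n : ℤ) : FockV p :=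
  if Even m then
    (-(-1 : ℂ) ^ n) • phi p (m - 1) n
      + ((-1 : ℂ) ^ n * (2 * (n : ℂ) - (m : ℂ) - (p : ℂ))) • psi p (m - 1) n
  else
    (-(-1 : ℂ) ^ n) • phi p (m - 1) n
      - ((-1 : ℂ) ^ n * ((m : ℂ) - 1)) • psi p (m - 1) n

/-- Image of the basis vector `φ_{m,n}` under `f⁺`. -/
noncomputable def fpPhi (p : ℕ) (m n : ℤ) : FockV p := phi p m (n + 1)

/-- Image of the basis vector `ψ_{m,n}` under `f⁺`. -/
noncomputable def fpPsi (p : ℕ) (m n : ℤ) : FockV p := psi p m (n + 1)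

/-- Image of the basis vector `φ_{m,n}` under `f⁻`. -/
noncomputable def fmPhi (p : ℕ) (m n : ℤ) : FockV p :=
  ((n : ℂ) * ((p : ℂ) + 1 - (n : ℂ))) • phi p m (n - 1)

/-- Image of the basis vector `ψ_{m,n}` under `f⁻`. -/
noncomputable def fmPsi (p : ℕ) (m n : ℤ) : FockV p :=
  phi p m (n - 1) + (((n : ℂ) - 1) * ((p : ℂ) - (n : ℂ))) • psi p m (n - 1)

/-- The linear operator on the Fock-like space determined by its values `F m n`
on the basis vectors `φ_{m,n}` and `G m n` on the basis vectors `ψ_{m,n}`. -/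
noncomputable def mkOp (p : ℕ) (F G : ℤ → ℤ → FockV p) : Module.End ℂ (FockV p) :=
  Finsupp.lift (FockV p) ℂ (FockIdx p) fun x =>
    match x with
    | Sum.inl a => F (a.1.1 : ℤ) (a.1.2 : ℤ)
    | Sum.inr a => G (a.1.1 : ℤ) (a.1.2 : ℤ)

/-- The operator `b⁺`. -/
noncomputable def opBp (p : ℕ) : Module.End ℂ (FockV p) := mkOp p (bpPhi p) (bpPsi p)

/-- The operator `b⁻`. -/
noncomputable def opBm (p : ℕ) : Module.End ℂ (FockV p) := mkOp p (bmPhi p) (bmPsi p)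

/-- The operator `f⁺`. -/
noncomputable def opFp (p : ℕ) : Module.End ℂ (FockV p) := mkOp p (fpPhi p) (fpPsi p)

/-- The operator `f⁻`. -/
noncomputable def opFm (p : ℕ) : Module.End ℂ (FockV p) := mkOp p (fmPhi p) (fmPsi p)

/-- `b^ξ` for a sign `ξ`: `b 1 = b⁺`, `b (-1) = b⁻`. -/
noncomputable def opB (p : ℕ) (ξ : ℤ) : Module.End ℂ (FockV p) :=
  if ξ = 1 then opBp p else opBm p

/-- `f^ξ` for a sign `ξ`: `f 1 = f⁺`, `f (-1) = f⁻`. -/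
noncomputable def opF (p : ℕ) (ξ : ℤ) : Module.End ℂ (FockV p) :=
  if ξ = 1 then opFp p else opFm p

/-- The commutator `[X, Y] = X∘Y − Y∘X` of operators. -/
noncomputable def opComm {p : ℕ} (X Y : Module.End ℂ (FockV p)) : Module.End ℂ (FockV p) :=
  X * Y - Y * X

/-- The anticommutator `{X, Y} = X∘Y + Y∘X` of operators. -/
noncomputable def opAComm {p : ℕ} (X Y : Module.End ℂ (FockV p)) : Module.End ℂ (FockV p) :=
  X * Y + Y * X

/-- A sign, i.e. `+1` or `-1`, regarded as an integer. -/
def IsSign (x : ℤ) : Prop := x = 1 ∨ x = -1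

/-- The operator `Q⁺ := ½(b⁻∘f⁺ + f⁺∘b⁻)`. -/
noncomputable def opQp (p : ℕ) : Module.End ℂ (FockV p) :=
  (1 / 2 : ℂ) • (opBm p * opFp p + opFp p * opBm p)

section
variable {p : ℕ}

lemma mkOp_single_inl (F G : ℤ → ℤ → FockV p) (a : PhiIdx p) :
    mkOp p F G (Finsupp.single (Sum.inl a) (1:ℂ)) = F a.1.1 a.1.2 := by
  simp [mkOp]

lemma mkOp_single_inr (F G : ℤ → ℤ → FockV p) (a : PsiIdx p) :
    mkOp p F G (Finsupp.single (Sum.inr a) (1:ℂ)) = G a.1.1 a.1.2 := by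
  simp [mkOp]

lemma phi_natCast (m n : ℕ) (h : n ≤ p) :
    phi p (m:ℤ) (n:ℤ) = Finsupp.single (Sum.inl ⟨(m,n),h⟩) 1 := by
  rw [phi, dif_pos (by exact ⟨by positivity, by positivity, by exact_mod_cast h⟩)]
  simp

lemma psi_natCast (m n : ℕ) (hm : 1 ≤ m) (hn : 1 ≤ n) (hnp : n + 1 ≤ p) :
    psi p (m:ℤ) (n:ℤ) = Finsupp.single (Sum.inr ⟨(m,n),⟨hm,hn,hnp⟩⟩) 1 := by
  rw [psi, dif_pos (by constructor <;> omega)]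
  simp

end
section
variable {p : ℕ}

lemma phi_zero {m n : ℤ} (h : ¬(0 ≤ m ∧ 0 ≤ n ∧ n ≤ (p:ℤ))) : phi p m n = 0 :=
  dif_neg h

lemma psi_zero (hp : 1 ≤ p) {m n : ℤ} (h : ¬(1 ≤ m ∧ 1 ≤ n ∧ n ≤ (p:ℤ))) : psi p m n = 0 := by
  rw [psi, dif_neg (by omega), if_neg (by omega)]

lemma psi_zero' {m n : ℤ} (h : ¬(1 ≤ m)) : psi p m n = 0 := by
  rw [psi, dif_neg (by omega), if_neg (by omega)]

lemma psi_top {m : ℤ} (hm : 1 ≤ m) : psi p m (p:ℤ) = (1 / (p:ℂ)) • phi p m (p:ℤ) := by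
  rw [psi, dif_neg (by omega), if_pos ⟨hm, rfl⟩]

lemma mkOp_phi (F G : ℤ → ℤ → FockV p) {m n : ℤ} (hm : 0 ≤ m) (hn : 0 ≤ n)
    (hnp : n ≤ (p:ℤ)) : mkOp p F G (phi p m n) = F m n := by
  obtain ⟨m, rfl⟩ := Int.eq_ofNat_of_zero_le hm
  obtain ⟨n, rfl⟩ := Int.eq_ofNat_of_zero_le hn
  rw [phi_natCast m n (by exact_mod_cast hnp), mkOp_single_inl]

lemma mkOp_psi (F G : ℤ → ℤ → FockV p) {m n : ℤ} (hm : 1 ≤ m) (hn : 1 ≤ n)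
    (hnp : n ≤ (p:ℤ) - 1) : mkOp p F G (psi p m n) = G m n := by
  obtain ⟨m, rfl⟩ := Int.eq_ofNat_of_zero_le (by omega : (0:ℤ) ≤ m)
  obtain ⟨n, rfl⟩ := Int.eq_ofNat_of_zero_le (by omega : (0:ℤ) ≤ n)
  rw [psi_natCast m n (by omega) (by omega) (by omega), mkOp_single_inr]

lemma mkOp_psi_top (F G : ℤ → ℤ → FockV p) {m : ℤ} (hm : 1 ≤ m) :
    mkOp p F G (psi p m (p:ℤ)) = (1 / (p:ℂ)) • F m (p:ℤ) := by
  rw [psi_top hm, map_smul, mkOp_phi F G (by omega) (by positivity) le_rfl]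

lemma mkOp_psi_zero (F G : ℤ → ℤ → FockV p) (hp : 1 ≤ p) {m n : ℤ}
    (h : ¬(1 ≤ m ∧ 1 ≤ n ∧ n ≤ (p:ℤ))) : mkOp p F G (psi p m n) = 0 := by
  rw [psi_zero hp h, map_zero]

lemma mkOp_phi_zero (F G : ℤ → ℤ → FockV p) {m n : ℤ}
    (h : ¬(0 ≤ m ∧ 0 ≤ n ∧ n ≤ (p:ℤ))) : mkOp p F G (phi p m n) = 0 := by
  rw [phi_zero h, map_zero]

end
section
variable {p : ℕ}

lemma opFp_phi {m n : ℤ} (hn : 0 ≤ n) : opFp p (phi p m n) = phi p m (n + 1) := by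
  by_cases h : 0 ≤ m ∧ n ≤ (p:ℤ)
  · rw [opFp, mkOp_phi _ _ h.1 hn h.2, fpPhi]
  · rw [opFp, mkOp_phi_zero _ _ (by omega), phi_zero (by omega)]

lemma opFp_psi (hp : 1 ≤ p) {m n : ℤ} (hn : 1 ≤ n) (hnp : n ≤ (p:ℤ)) :
    opFp p (psi p m n) = psi p m (n + 1) := by
  by_cases hm : 1 ≤ m
  · rcases lt_or_eq_of_le hnp with h | h
    · rw [opFp, mkOp_psi _ _ hm hn (by omega), fpPsi]
    · subst h
      rw [opFp, mkOp_psi_top _ _ hm, fpPhi, phi_zero (by omega),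
        psi_zero hp (by omega), smul_zero]
  · rw [psi_zero hp (by omega), map_zero, psi_zero hp (by omega)]

lemma opBm_phi (hp : 1 ≤ p) (m n : ℤ) : opBm p (phi p m n) = bmPhi p m n := by
  by_cases h : 0 ≤ m ∧ 0 ≤ n ∧ n ≤ (p:ℤ)
  · rw [opBm, mkOp_phi _ _ h.1 h.2.1 h.2.2]
  · rw [opBm, mkOp_phi_zero _ _ h, bmPhi, phi_zero (by omega), psi_zero hp (by omega)]
    split <;> simp

lemma opBm_psi (hp : 1 ≤ p) {m n : ℤ} (hn : 1 ≤ n) :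
    opBm p (psi p m n) = bmPsi p m n := by
  by_cases h : 1 ≤ m ∧ n ≤ (p:ℤ)
  · obtain ⟨hm, hnp⟩ := h
    rcases lt_or_eq_of_le hnp with hlt | heq
    · rw [opBm, mkOp_psi _ _ hm hn (by omega)]
    · subst heq
      have hpc : (p:ℂ) ≠ 0 := Nat.cast_ne_zero.mpr (by omega)
      rw [opBm, mkOp_psi_top _ _ hm, bmPhi, bmPsi]
      rcases Int.even_or_odd m with he | ho
      · have h2 : 2 ≤ m := by rcases he with ⟨k, rfl⟩; omega
        rw [if_pos he, if_pos he, psi_top (by omega : 1 ≤ m - 1)]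
        match_scalars <;> field_simp <;> ring
      · rw [if_neg (Int.not_even_iff_odd.mpr ho), if_neg (Int.not_even_iff_odd.mpr ho)]
        rcases eq_or_lt_of_le hm with h1 | h2
        · rw [← h1, psi_zero hp (by omega)]
          match_scalars <;> field_simp <;> ring
        · rw [psi_top (by omega : 1 ≤ m - 1)]
          match_scalars <;> field_simp <;> ring
  · rw [psi_zero hp (by omega), map_zero, bmPsi, phi_zero (by omega),
      psi_zero hp (by omega)]
    split <;> simp

lemma opQp_apply (v : FockV p) :
    opQp p v = (1 / 2 : ℂ) • (opBm p (opFp p v) + opFp p (opBm p v)) := rfl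

end
section
variable {p : ℕ}

lemma neg_one_zpow_succ (n : ℤ) : (-1 : ℂ) ^ (n + 1) = -(-1 : ℂ) ^ n := by
  rw [zpow_add_one₀ (by norm_num : (-1:ℂ) ≠ 0)]; ring

lemma Qphi_even (hp : 1 ≤ p) {m n : ℤ} (hm : 0 ≤ m) (hn : 0 ≤ n) (hnp : n ≤ (p:ℤ))
    (he : Even m) :
    opQp p (phi p m n) = ((-1 : ℂ) ^ n * (m : ℂ)) • psi p (m - 1) (n + 1) := by
  rw [opQp_apply, opFp_phi hn, opBm_phi hp, opBm_phi hp, bmPhi, bmPhi,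
    if_pos he, if_pos he, map_sub, map_smul, map_smul, opFp_phi hn]
  rcases eq_or_lt_of_le hn with h0 | h1
  · rw [← h0]
    rw [neg_one_zpow_succ]
    push_cast
    module
  · rw [opFp_psi hp h1 hnp, neg_one_zpow_succ]
    push_cast
    module

lemma Qphi_odd (hp : 1 ≤ p) {m n : ℤ} (hm : 0 ≤ m) (hn : 0 ≤ n) (hnp : n ≤ (p:ℤ))
    (ho : Odd m) :
    opQp p (phi p m n)
      = ((-1 : ℂ) ^ n) • (phi p (m - 1) (n + 1) + ((m : ℂ) - 1) • psi p (m - 1) (n + 1)) := by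
  have hne := Int.not_even_iff_odd.mpr ho
  rw [opQp_apply, opFp_phi hn, opBm_phi hp, opBm_phi hp, bmPhi, bmPhi,
    if_neg hne, if_neg hne, map_sub, map_smul, map_smul, opFp_phi hn]
  rcases eq_or_lt_of_le hn with h0 | h1
  · rw [← h0]
    rw [neg_one_zpow_succ]
    push_cast
    module
  · rw [opFp_psi hp h1 hnp, neg_one_zpow_succ]
    push_cast
    module

lemma Qpsi_even (hp : 1 ≤ p) {m n : ℤ} (hm : 1 ≤ m) (hn : 1 ≤ n) (hnp : n ≤ (p:ℤ))
    (he : Even m) :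
    opQp p (psi p m n) = ((-1 : ℂ) ^ (n + 1)) • psi p (m - 1) (n + 1) := by
  rw [opQp_apply, opFp_psi hp hn hnp, opBm_psi hp (by omega), opBm_psi hp hn,
    bmPsi, bmPsi, if_pos he, if_pos he, map_add, map_smul, map_smul,
    opFp_phi (by omega), opFp_psi hp hn hnp, neg_one_zpow_succ]
  push_cast
  module

lemma Qpsi_odd (hp : 1 ≤ p) {m n : ℤ} (hm : 1 ≤ m) (hn : 1 ≤ n) (hnp : n ≤ (p:ℤ))
    (ho : Odd m) :
    opQp p (psi p m n) = 0 := by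
  have hne := Int.not_even_iff_odd.mpr ho
  rw [opQp_apply, opFp_psi hp hn hnp, opBm_psi hp (by omega), opBm_psi hp hn,
    bmPsi, bmPsi, if_neg hne, if_neg hne, map_sub, map_smul, map_smul,
    opFp_phi (by omega), opFp_psi hp hn hnp, neg_one_zpow_succ]
  module

end
section
variable {p : ℕ}

lemma Qsq_phi (hp : 1 ≤ p) (m n : ℕ) (hnp : n ≤ p) :
    opQp p (opQp p (phi p (m:ℤ) (n:ℤ))) = 0 := by
  have hn0 : (0:ℤ) ≤ (n:ℤ) := by positivity
  have hnp' : (n:ℤ) ≤ (p:ℤ) := by exact_mod_cast hnp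
  rcases Nat.even_or_odd m with he | ho
  · have he' : Even (m:ℤ) := Int.even_coe_nat m |>.mpr he
    rw [Qphi_even hp (by positivity) hn0 hnp' he', map_smul]
    rcases Nat.eq_zero_or_pos m with h0 | h1
    · subst h0; simp
    · have h2 : 2 ≤ m := by rcases he with ⟨k, rfl⟩; omega
      have hodd : Odd ((m:ℤ) - 1) := by
        rcases he with ⟨k, rfl⟩; exact ⟨(k:ℤ) - 1, by push_cast; ring⟩
      rcases eq_or_lt_of_le hnp' with hq | hq
      · have hz : psi p ((m:ℤ) - 1) ((n:ℤ) + 1) = 0 := psi_zero hp (by omega)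
        rw [hz, map_zero, smul_zero]
      · rw [Qpsi_odd hp (by omega) (by omega) (by omega) hodd, smul_zero]
  · have ho' : Odd (m:ℤ) := Int.odd_coe_nat m |>.mpr ho
    have hm1 : 1 ≤ m := by rcases ho with ⟨k, hk⟩; omega
    rw [Qphi_odd hp (by positivity) hn0 hnp' ho', map_smul, map_add, map_smul]
    have he2 : Even ((m:ℤ) - 1) := by
      rcases ho with ⟨k, rfl⟩; exact ⟨(k:ℤ), by push_cast; ring⟩
    rcases eq_or_lt_of_le hnp' with hq | hq
    · have hz1 : phi p ((m:ℤ) - 1) ((n:ℤ) + 1) = 0 := phi_zero (by omega)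
      have hz2 : psi p ((m:ℤ) - 1) ((n:ℤ) + 1) = 0 := psi_zero hp (by omega)
      rw [hz1, hz2]
      simp
    · have e1 : opQp p (phi p ((m:ℤ) - 1) ((n:ℤ) + 1))
          = ((-1:ℂ) ^ ((n:ℤ) + 1) * (((m:ℤ) - 1 : ℤ) : ℂ))
            • psi p ((m:ℤ) - 1 - 1) ((n:ℤ) + 1 + 1) :=
        Qphi_even hp (by omega) (by omega) (by omega) he2
      have e2 : (((m:ℤ) : ℂ) - 1) • opQp p (psi p ((m:ℤ) - 1) ((n:ℤ) + 1))
          = (((m:ℤ) : ℂ) - 1) • (((-1:ℂ) ^ ((n:ℤ) + 1 + 1))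
            • psi p ((m:ℤ) - 1 - 1) ((n:ℤ) + 1 + 1)) := by
        rcases eq_or_lt_of_le hm1 with h1 | h3
        · have : ((m:ℤ) : ℂ) - 1 = 0 := by
            have : (m:ℤ) = 1 := by omega
            rw [this]; norm_num
          rw [this, zero_smul, zero_smul]
        · exact congrArg _ (Qpsi_even hp (by omega) (by omega) (by omega) he2)
      rw [e1, e2]
      simp only [neg_one_zpow_succ]
      push_cast
      module

lemma Qsq_psi (hp : 1 ≤ p) (m n : ℕ) (hm : 1 ≤ m) (hn : 1 ≤ n) (hnp : n + 1 ≤ p) :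
    opQp p (opQp p (psi p (m:ℤ) (n:ℤ))) = 0 := by
  have hn' : (1:ℤ) ≤ (n:ℤ) := by exact_mod_cast hn
  have hnp' : (n:ℤ) ≤ (p:ℤ) := by exact_mod_cast Nat.le_of_succ_le hnp
  rcases Nat.even_or_odd m with he | ho
  · have he' : Even (m:ℤ) := Int.even_coe_nat m |>.mpr he
    have h2 : 2 ≤ m := by rcases he with ⟨k, rfl⟩; omega
    have hodd : Odd ((m:ℤ) - 1) := by
      rcases he with ⟨k, rfl⟩; exact ⟨(k:ℤ) - 1, by push_cast; ring⟩
    rw [Qpsi_even hp (by omega) hn' hnp' he', map_smul,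
      Qpsi_odd hp (by omega) (by omega) (by exact_mod_cast hnp) hodd, smul_zero]
  · have ho' : Odd (m:ℤ) := Int.odd_coe_nat m |>.mpr ho
    rw [Qpsi_odd hp (by omega) hn' hnp' ho', map_zero]

lemma Qsq (hp : 1 ≤ p) : opQp p * opQp p = 0 := by
  refine Finsupp.lhom_ext fun x b => ?_
  have hx : (Finsupp.single x b : FockV p) = b • Finsupp.single x 1 := by
    rw [Finsupp.smul_single, smul_eq_mul, mul_one]
  show (opQp p * opQp p) (Finsupp.single x b) = (0 : Module.End ℂ (FockV p)) (Finsupp.single x b)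
  simp only [Module.End.mul_apply, LinearMap.zero_apply]
  rw [hx, map_smul, map_smul]
  rcases x with a | a
  · obtain ⟨⟨m, n⟩, h⟩ := a
    rw [← phi_natCast m n h, Qsq_phi hp m n h, smul_zero]
  · obtain ⟨⟨m, n⟩, h1, h2, h3⟩ := a
    rw [← psi_natCast m n h1 h2 h3, Qsq_psi hp m n h1 h2 h3, smul_zero]

end
/-- Action of `Q⁺` on the basis vectors and the nilpotency `(Q⁺)² = 0`. -/
theorem Qplus_action (p : ℕ) (hp : 1 ≤ p) :
    (∀ m n : ℤ, 0 ≤ m → 0 ≤ n → n ≤ (p : ℤ) → Even m →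
      opQp p (phi p m n) = ((-1 : ℂ) ^ n * (m : ℂ)) • psi p (m - 1) (n + 1)) ∧
    (∀ m n : ℤ, 0 ≤ m → 0 ≤ n → n ≤ (p : ℤ) → Odd m →
      opQp p (phi p m n)
        = ((-1 : ℂ) ^ n) • (phi p (m - 1) (n + 1)
            + ((m : ℂ) - 1) • psi p (m - 1) (n + 1))) ∧
    (∀ m n : ℤ, 1 ≤ m → 1 ≤ n → n ≤ (p : ℤ) → Even m →
      opQp p (psi p m n) = ((-1 : ℂ) ^ (n + 1)) • psi p (m - 1) (n + 1)) ∧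
    (∀ m n : ℤ, 1 ≤ m → 1 ≤ n → n ≤ (p : ℤ) → Odd m →
      opQp p (psi p m n) = 0) ∧
    opQp p * opQp p = 0 := by
  exact ⟨fun m n hm hn hnp he => Qphi_even hp hm hn hnp he,
    fun m n hm hn hnp ho => Qphi_odd hp hm hn hnp ho,
    fun m n hm hn hnp he => Qpsi_even hp hm hn hnp he,
    fun m n hm hn hnp ho => Qpsi_odd hp hm hn hnp ho,
    Qsq hp⟩
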